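/- The map β ↦ m(β) is strictly increasing on [1, ∞), where m(β) denotes the largest solution of tanh(βx) = x. -/

import Mathlib

open Real Set

/-- `m β` is the largest solution of the Curie-Weiss equation `tanh (β * x) = x`. -/
noncomputable def cwM (β : ℝ) : ℝ := sSup {x : ℝ | Real.tanh (β * x) = x}

lemma my_hasDerivAt_tanh (x : ℝ) : HasDerivAt Real.tanh (1 / Real.cosh x ^ 2) x := by
  have h : HasDerivAt (fun y => Real.sinh y / Real.cosh y)
      ((Real.cosh x * Real.cosh x - Real.sinh x * Real.sinh x) / Real.cosh x ^ 2) x :=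
    (Real.hasDerivAt_sinh x).div (Real.hasDerivAt_cosh x) (Real.cosh_pos x).ne'
  have heq : (fun y => Real.sinh y / Real.cosh y) = Real.tanh := by
    funext y; rw [Real.tanh_eq_sinh_div_cosh]
  rw [heq] at h
  have h1 : Real.cosh x * Real.cosh x - Real.sinh x * Real.sinh x = 1 := by
    nlinarith [Real.cosh_sq_sub_sinh_sq x]
  rwa [h1] at h

lemma my_continuous_tanh : Continuous Real.tanh := by
  have heq : Real.tanh = (fun y => Real.sinh y / Real.cosh y) := by
    funext y; rw [Real.tanh_eq_sinh_div_cosh]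
  rw [heq]
  exact Real.continuous_sinh.div Real.continuous_cosh fun y => (Real.cosh_pos y).ne'

lemma my_deriv_tanh : deriv Real.tanh = fun x => 1 / Real.cosh x ^ 2 :=
  funext fun x => (my_hasDerivAt_tanh x).deriv

lemma my_tanh_strictMono : StrictMono Real.tanh :=
  strictMono_of_deriv_pos (fun x => by
    rw [my_deriv_tanh]; positivity)

lemma my_tanh_lt_one (x : ℝ) : Real.tanh x < 1 := by
  rw [Real.tanh_eq_sinh_div_cosh, div_lt_one (Real.cosh_pos x)]
  nlinarith [Real.cosh_sub_sinh x, Real.exp_pos (-x)]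

lemma my_tanh_strictConcaveOn : StrictConcaveOn ℝ (Set.Ici (0:ℝ)) Real.tanh := by
  apply strictConcaveOn_of_deriv2_neg (convex_Ici 0) my_continuous_tanh.continuousOn
  intro x hx
  rw [interior_Ici, mem_Ioi] at hx
  have hd : HasDerivAt (fun y => 1 / Real.cosh y ^ 2)
      (-((2:ℕ) * Real.cosh x ^ 1 * Real.sinh x) / (Real.cosh x ^ 2) ^ 2) x := by
    have h1 : HasDerivAt (fun y => Real.cosh y ^ 2)
        ((2:ℕ) * Real.cosh x ^ 1 * Real.sinh x) x := (Real.hasDerivAt_cosh x).pow 2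
    have h2 := h1.inv (by positivity)
    rw [show (fun y => 1 / Real.cosh y ^ 2) = (fun y => Real.cosh y ^ 2)⁻¹ from by funext y; simp [one_div]]
    exact h2
  have : deriv^[2] Real.tanh x = deriv (deriv Real.tanh) x := by
    simp [Function.iterate_succ, Function.comp]
  rw [this, my_deriv_tanh, hd.deriv]
  have hs : 0 < Real.sinh x := by rwa [Real.sinh_pos_iff]
  have hc : 0 < Real.cosh x := Real.cosh_pos x
  apply div_neg_of_neg_of_pos
  · push_cast; nlinarith
  · positivity

/-- slope comparison from strict concavity with `tanh 0 = 0`. -/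
lemma my_tanh_slope {u v : ℝ} (hu : 0 < u) (huv : u < v) :
    u * Real.tanh v < v * Real.tanh u := by
  have hv : 0 < v := hu.trans huv
  have ha' : (0:ℝ) < 1 - u/v := by rw [sub_pos]; exact (div_lt_one hv).2 huv
  have hb' : (0:ℝ) < u/v := by positivity
  have hab' : (1 - u/v) + u/v = 1 := by ring
  have h := my_tanh_strictConcaveOn.2 (Set.self_mem_Ici (a := (0:ℝ)))
    (Set.mem_Ici.2 hv.le) hv.ne ha' hb' hab' 
  simp only [smul_eq_mul, mul_zero, Real.tanh_zero, zero_add] at h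
  have hvu : u / v * v = u := div_mul_cancel₀ u hv.ne'
  rw [hvu] at h
  have := (mul_lt_mul_iff_right₀ hv).2 h
  calc u * Real.tanh v = v * (u / v * Real.tanh v) := by field_simp
    _ < v * Real.tanh u := this

lemma mem_cw_zero (β : ℝ) : (0:ℝ) ∈ {x : ℝ | Real.tanh (β * x) = x} := by
  simp [Real.tanh_zero]

lemma cw_bddAbove (β : ℝ) : BddAbove {x : ℝ | Real.tanh (β * x) = x} := by
  refine ⟨1, fun x hx => ?_⟩
  have : Real.tanh (β * x) = x := hx
  have := my_tanh_lt_one (β * x)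
  linarith [this]

lemma cw_closed (β : ℝ) : IsClosed {x : ℝ | Real.tanh (β * x) = x} :=
  isClosed_eq (my_continuous_tanh.comp (continuous_const.mul continuous_id)) continuous_id

lemma cwM_mem (β : ℝ) : Real.tanh (β * cwM β) = cwM β :=
  (cw_closed β).csSup_mem ⟨0, mem_cw_zero β⟩ (cw_bddAbove β)

/-- For `b > 1` there is a strictly positive solution. -/
lemma cw_exists_pos {b : ℝ} (hb : 1 < b) :
    ∃ x : ℝ, 0 < x ∧ Real.tanh (b * x) = x := by
  set g : ℝ → ℝ := fun x => Real.tanh (b * x) - x with hg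
  have hg0 : g 0 = 0 := by simp [hg, Real.tanh_zero]
  have hd : HasDerivAt g (b - 1) 0 := by
    have h1 : HasDerivAt (fun x : ℝ => b * x) b 0 := by
      simpa using (hasDerivAt_id (0:ℝ)).const_mul b
    have h2 : HasDerivAt (fun x => Real.tanh (b * x)) (1 / Real.cosh (b * 0) ^ 2 * b) 0 :=
      (my_hasDerivAt_tanh (b * 0)).comp 0 h1
    have h3 := h2.sub (hasDerivAt_id (0:ℝ))
    exact (show HasDerivAt ((fun x => Real.tanh (b * x)) - id) (b - 1) 0 by simpa [Real.cosh_zero] using h3)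
  -- slope tends to b - 1 > 0 near 0, so g is positive somewhere on (0,1)
  have hslope := hasDerivAt_iff_tendsto_slope.1 hd
  have hpos : ∀ᶠ x in nhdsWithin (0:ℝ) {(0:ℝ)}ᶜ, 0 < slope g 0 x :=
    hslope.eventually (eventually_gt_nhds (by linarith))
  have hle : nhdsWithin (0:ℝ) (Set.Ioi 0) ≤ nhdsWithin (0:ℝ) {(0:ℝ)}ᶜ :=
    nhdsWithin_mono 0 (fun x hx => ne_of_gt hx)
  have hpos' : ∀ᶠ x in nhdsWithin (0:ℝ) (Set.Ioi 0), 0 < slope g 0 x := hle hpos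
  have hlt1 : ∀ᶠ x in nhdsWithin (0:ℝ) (Set.Ioi 0), x < 1 :=
    eventually_nhdsWithin_of_eventually_nhds (eventually_lt_nhds one_pos)
  have hmem : ∀ᶠ x in nhdsWithin (0:ℝ) (Set.Ioi 0), x ∈ Set.Ioi (0:ℝ) :=
    self_mem_nhdsWithin
  obtain ⟨x, ⟨hx1, hx2⟩, hx3⟩ := ((hpos'.and hlt1).and hmem).exists
  have hx0 : (0:ℝ) < x := hx3
  have hgx : 0 < g x := by
    have : slope g 0 x = g x / x := by
      simp [slope_def_field, hg0, div_eq_mul_inv]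
    rw [this] at hx1
    have := mul_pos hx1 hx0
    rwa [div_mul_cancel₀ _ hx0.ne'] at this
  -- g 1 < 0
  have hg1 : g 1 < 0 := by
    have := my_tanh_lt_one (b * 1)
    simp only [hg]
    linarith
  have hcont : ContinuousOn g (Set.Icc x 1) :=
    ((my_continuous_tanh.comp (continuous_const.mul continuous_id)).sub continuous_id).continuousOn
  have hivt := intermediate_value_Icc' (le_of_lt hx2) hcont
  have h0mem : (0:ℝ) ∈ Set.Icc (g 1) (g x) := ⟨le_of_lt hg1, le_of_lt hgx⟩
  obtain ⟨c, hc1, hc2⟩ := hivt h0mem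
  refine ⟨c, lt_of_lt_of_le hx0 hc1.1, ?_⟩
  have : Real.tanh (b * c) - c = 0 := hc2
  linarith

theorem stmt_1 : StrictMonoOn cwM (Set.Ici (1 : ℝ)) := by
  intro a ha b hb hab
  have ha1 : (1:ℝ) ≤ a := ha
  have hb1 : (1:ℝ) < b := lt_of_le_of_lt ha1 hab
  obtain ⟨c, hc0, hcS⟩ := cw_exists_pos hb1
  set m := cwM b with hmdef
  have hm : Real.tanh (b * m) = m := cwM_mem b
  have hmpos : 0 < m := lt_of_lt_of_le hc0 (le_csSup (cw_bddAbove b) hcS)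
  have hbpos : (0:ℝ) < b := by linarith
  -- every solution for a is ≤ m
  have hsub : ∀ x ∈ {x : ℝ | Real.tanh (a * x) = x}, x ≤ m := by
    intro x hx
    by_contra hcon
    push_neg at hcon
    have hxpos : 0 < x := hmpos.trans hcon
    have h1 : (0:ℝ) < b * m := by positivity
    have h2 : b * m < b * x := by
      exact (mul_lt_mul_iff_right₀ hbpos).2 hcon
    have hsl := my_tanh_slope h1 h2
    rw [hm] at hsl
    -- b * m * tanh (b*x) < b * x * m  ⇒ tanh (b*x) < x
    have htbx : Real.tanh (b * x) < x := by
      have hstep : b * m * Real.tanh (b * x) < b * m * x := by nlinarith [hsl]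
      exact (mul_lt_mul_iff_right₀ h1).1 hstep
    have hax : a * x ≤ b * x := by nlinarith
    have : Real.tanh (a * x) ≤ Real.tanh (b * x) := my_tanh_strictMono.monotone hax
    have hxx : Real.tanh (a * x) = x := hx
    linarith
  have hle : cwM a ≤ m := csSup_le ⟨0, mem_cw_zero a⟩ hsub
  have hne : cwM a ≠ m := by
    intro h
    have hma : Real.tanh (a * cwM a) = cwM a := cwM_mem a
    rw [h] at hma
    have : Real.tanh (a * m) < Real.tanh (b * m) :=
      my_tanh_strictMono ((mul_lt_mul_iff_left₀ hmpos).2 hab)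
    rw [hm, hma] at this
    exact lt_irrefl m this
  exact lt_of_le_of_ne hle hne
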